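/- Let Ω, Ω* be compact metric spaces with Ω nonempty, and let c : Ω × Ω* → ℝ be continuous. Let μ₁, μ₂ be Borel probability measures on Ω and ν a Borel probability measure on Ω*. For i = 1, 2 suppose φᵢ ∈ C(Ω, ℝ) is a Kantorovich potential for (μᵢ, ν), i.e. a global minimizer over C(Ω, ℝ) of φ ↦ ∫_{Ω*} φ^c dν − ∫_Ω φ dμᵢ, where φ^c(y) = sup_{x ∈ Ω} (φ(x) − c(x, y)). Let U ⊆ Ω be a Borel set such that μ₁(A) ≤ μ₂(A) for every Borel A ⊆ U, and φ₁ ≤ φ₂ on Ω \ U. Then the pointwise minimum φ₁ ⊓ φ₂ is a Kantorovich potential for (μ₁, ν), the pointwise maximum φ₁ ⊔ φ₂ is a Kantorovich potential for (μ₂, ν), and ∫_Ω (φ₁ − φ₂)⁺ d|μ₂ − μ₁| = 0, where |μ₂ − μ₁| is the total variation measure of the signed measure μ₂ − μ₁ (hence φ₁ ≤ φ₂ on the support of μ₂ − μ₁). -/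

import Mathlib

open MeasureTheory

set_option linter.unusedSectionVars false

section Aux
variable {Ω : Type*} [MetricSpace Ω] [CompactSpace Ω] [Nonempty Ω]

lemma aux_bdd (f : Ω → ℝ) (hf : Continuous f) : BddAbove (Set.range f) :=
  (isCompact_range hf).bddAbove

lemma aux_sup_le_sup_add (F G : C(Ω, ℝ)) : (⨆ x, F x) ≤ (⨆ x, G x) + ‖F - G‖ := by
  refine ciSup_le fun x => ?_
  have h1 : F x - G x ≤ ‖F - G‖ := by
    calc F x - G x ≤ |F x - G x| := le_abs_self _
    _ = ‖(F - G) x‖ := by simp [Real.norm_eq_abs]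
    _ ≤ ‖F - G‖ := ContinuousMap.norm_coe_le_norm _ x
  have h2 : G x ≤ ⨆ y, G y := le_ciSup (aux_bdd _ G.continuous) x
  linarith

lemma aux_lip : LipschitzWith 1 (fun F : C(Ω, ℝ) => ⨆ x, F x) := by
  refine LipschitzWith.of_dist_le_mul fun F G => ?_
  rw [NNReal.coe_one, one_mul, Real.dist_eq, dist_eq_norm]
  refine abs_sub_le_iff.2 ⟨?_, ?_⟩
  · have := aux_sup_le_sup_add F G; linarith
  · have := aux_sup_le_sup_add G F
    rw [show ‖G - F‖ = ‖F - G‖ by rw [← norm_neg]; ring_nf] at this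
    linarith

lemma aux_cont_ctrans {Ωs : Type*} [MetricSpace Ωs] (c : Ω × Ωs → ℝ) (hc : Continuous c)
    (φ : C(Ω, ℝ)) : Continuous fun y => ⨆ x, (φ x - c (x, y)) := by
  have hF : Continuous fun p : Ωs × Ω => φ p.2 - c (p.2, p.1) := by fun_prop
  let F : C(Ωs × Ω, ℝ) := ⟨_, hF⟩
  have : (fun y => ⨆ x, (φ x - c (x, y)))
      = (fun G : C(Ω, ℝ) => ⨆ x, G x) ∘ (F.curry) := rfl
  rw [this]
  exact aux_lip.continuous.comp F.curry.continuous

lemma aux_integrable {X : Type*} [MetricSpace X] [CompactSpace X] [MeasurableSpace X]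
    [BorelSpace X] (μ : Measure X) [IsFiniteMeasure μ] {f : X → ℝ} (hf : Continuous f) :
    Integrable f μ :=
  hf.integrable_of_hasCompactSupport (HasCompactSupport.of_compactSpace f)

end Aux

lemma aux_tv {X : Type*} [MeasurableSpace X] (μ₁ μ₂ : Measure X)
    [IsFiniteMeasure μ₁] [IsFiniteMeasure μ₂] {A : Set X} (hA : MeasurableSet A)
    (hmono : ∀ B, B ⊆ A → MeasurableSet B → μ₁ B ≤ μ₂ B) :
    (μ₂.toSignedMeasure - μ₁.toSignedMeasure).totalVariation A + μ₁ A = μ₂ A := by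
  set σ := μ₂.toSignedMeasure - μ₁.toSignedMeasure with hσ
  set j := σ.toJordanDecomposition with hjdef
  obtain ⟨S, hSm, hS1, hS2⟩ := j.mutuallySingular
  have hσ_eq : ∀ B, MeasurableSet B → σ B = (μ₂ B).toReal - (μ₁ B).toReal := fun B hB =>
    Measure.toSignedMeasure_sub_apply hB
  have hj : ∀ B, MeasurableSet B → σ B = (j.posPart B).toReal - (j.negPart B).toReal := by
    intro B hB
    conv_lhs => rw [← σ.toSignedMeasure_toJordanDecomposition]
    rw [JordanDecomposition.toSignedMeasure, ← hjdef]
    exact Measure.toSignedMeasure_sub_apply hB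
  have hnAS : j.negPart (A ∩ S) = 0 := by
    have h1 : 0 ≤ σ (A ∩ S) := by
      rw [hσ_eq _ (hA.inter hSm)]
      have := hmono (A ∩ S) Set.inter_subset_left (hA.inter hSm)
      have h2 := ENNReal.toReal_mono (measure_ne_top μ₂ _) this
      linarith
    have h2 : j.posPart (A ∩ S) = 0 :=
      measure_mono_null Set.inter_subset_right hS1
    rw [hj _ (hA.inter hSm), h2] at h1
    simp only [ENNReal.toReal_zero, zero_sub, neg_nonneg] at h1
    have h3 : (j.negPart (A ∩ S)).toReal = 0 :=
      le_antisymm h1 ENNReal.toReal_nonneg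
    exact (ENNReal.toReal_eq_zero_iff _).1 h3 |>.resolve_right (measure_ne_top _ _)
  have hnA : j.negPart A = 0 := by
    have hcover : A ⊆ (A ∩ S) ∪ (A ∩ Sᶜ) := by
      intro x hx; by_cases hxS : x ∈ S
      · exact Or.inl ⟨hx, hxS⟩
      · exact Or.inr ⟨hx, hxS⟩
    refine le_antisymm ?_ zero_le
    calc j.negPart A ≤ j.negPart ((A ∩ S) ∪ (A ∩ Sᶜ)) := measure_mono hcover
      _ ≤ j.negPart (A ∩ S) + j.negPart (A ∩ Sᶜ) := measure_union_le _ _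
      _ = 0 := by
          rw [hnAS, measure_mono_null Set.inter_subset_right hS2]; simp
  have hp : (j.posPart A).toReal = (μ₂ A).toReal - (μ₁ A).toReal := by
    have h1 := hj A hA
    rw [hσ_eq A hA, hnA] at h1
    simp only [ENNReal.toReal_zero, sub_zero] at h1
    linarith
  have htv : σ.totalVariation A = j.posPart A := by
    rw [SignedMeasure.totalVariation, ← hjdef, Measure.add_apply, hnA, add_zero]
  rw [htv, ← ENNReal.toReal_eq_toReal_iff' (by finiteness) (measure_ne_top μ₂ A),
    ENNReal.toReal_add (measure_ne_top _ _) (measure_ne_top μ₁ A)]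
  linarith

/-- Comparison principle for Kantorovich potentials, i.e. global
minimizers of `φ ↦ ∫ φ^c dν − ∫ φ dμ` where `φ^c` is the c-transform. -/
theorem comparison_principle_kantorovich_potentials
    {Ω Ωs : Type*} [MetricSpace Ω] [CompactSpace Ω] [Nonempty Ω]
    [MeasurableSpace Ω] [BorelSpace Ω]
    [MetricSpace Ωs] [CompactSpace Ωs] [MeasurableSpace Ωs] [BorelSpace Ωs]
    (c : Ω × Ωs → ℝ) (hc : Continuous c)
    (μ₁ μ₂ : Measure Ω) [IsProbabilityMeasure μ₁] [IsProbabilityMeasure μ₂]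
    (ν : Measure Ωs) [IsProbabilityMeasure ν]
    (J : Measure Ω → C(Ω, ℝ) → ℝ)
    (hJ : ∀ (μ : Measure Ω) (φ : C(Ω, ℝ)),
      J μ φ = ∫ y, (⨆ x : Ω, (φ x - c (x, y))) ∂ν - ∫ x, φ x ∂μ)
    (φ₁ φ₂ : C(Ω, ℝ))
    (h₁ : ∀ ψ : C(Ω, ℝ), J μ₁ φ₁ ≤ J μ₁ ψ)
    (h₂ : ∀ ψ : C(Ω, ℝ), J μ₂ φ₂ ≤ J μ₂ ψ)
    (U : Set Ω) (hU : MeasurableSet U)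
    (hμ : ∀ A : Set Ω, A ⊆ U → MeasurableSet A → μ₁ A ≤ μ₂ A)
    (hφ : ∀ x ∈ Uᶜ, φ₁ x ≤ φ₂ x) :
    (∀ ψ : C(Ω, ℝ), J μ₁ (φ₁ ⊓ φ₂) ≤ J μ₁ ψ) ∧
      (∀ ψ : C(Ω, ℝ), J μ₂ (φ₁ ⊔ φ₂) ≤ J μ₂ ψ) ∧
      ∫⁻ x, ENNReal.ofReal (φ₁ x - φ₂ x)
        ∂(μ₂.toSignedMeasure - μ₁.toSignedMeasure).totalVariation = 0 := by
  set f : Ω → ℝ := fun x => max (φ₁ x - φ₂ x) 0 with hfdef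
  have hfc : Continuous f := by
    rw [hfdef]; fun_prop
  have hf0 : ∀ x, 0 ≤ f x := fun x => le_max_right _ _
  have hfUc : ∀ x ∈ Uᶜ, f x = 0 := fun x hx => max_eq_right (sub_nonpos.2 (hφ x hx))
  -- pointwise identities on Ω
  have hm : ∀ x, (φ₁ ⊓ φ₂) x = φ₁ x - f x := by
    intro x
    simp only [ContinuousMap.inf_apply, hfdef]
    rcases le_total (φ₁ x) (φ₂ x) with h | h
    · rw [min_eq_left h, max_eq_right (sub_nonpos.2 h)]; ring
    · rw [min_eq_right h, max_eq_left (sub_nonneg.2 h)]; ring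
  have hM : ∀ x, (φ₁ ⊔ φ₂) x = φ₂ x + f x := by
    intro x
    simp only [ContinuousMap.sup_apply, hfdef]
    rcases le_total (φ₁ x) (φ₂ x) with h | h
    · rw [max_eq_right h, max_eq_right (sub_nonpos.2 h)]; ring
    · rw [max_eq_left h, max_eq_left (sub_nonneg.2 h)]; ring
  -- integrability on Ω
  have hint_f₁ : Integrable f μ₁ := aux_integrable μ₁ hfc
  have hint_f₂ : Integrable f μ₂ := aux_integrable μ₂ hfc
  -- integral identities on Ω
  have hIm : ∫ x, (φ₁ ⊓ φ₂) x ∂μ₁ = ∫ x, φ₁ x ∂μ₁ - ∫ x, f x ∂μ₁ := by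
    rw [← integral_sub (aux_integrable μ₁ φ₁.continuous) hint_f₁]
    exact integral_congr_ae (Filter.Eventually.of_forall hm)
  have hIM : ∫ x, (φ₁ ⊔ φ₂) x ∂μ₂ = ∫ x, φ₂ x ∂μ₂ + ∫ x, f x ∂μ₂ := by
    rw [← integral_add (aux_integrable μ₂ φ₂.continuous) hint_f₂]
    exact integral_congr_ae (Filter.Eventually.of_forall hM)
  -- f vanishes off U
  have hfU₁ : ∫ x, f x ∂μ₁ = ∫ x in U, f x ∂μ₁ := by
    rw [← integral_add_compl hU hint_f₁,
      setIntegral_eq_zero_of_forall_eq_zero fun x hx => hfUc x hx, add_zero]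
  have hfU₂ : ∫ x, f x ∂μ₂ = ∫ x in U, f x ∂μ₂ := by
    rw [← integral_add_compl hU hint_f₂,
      setIntegral_eq_zero_of_forall_eq_zero fun x hx => hfUc x hx, add_zero]
  have hres_le : μ₁.restrict U ≤ μ₂.restrict U := by
    refine Measure.le_iff.2 fun s hs => ?_
    rw [Measure.restrict_apply hs, Measure.restrict_apply hs]
    exact hμ _ Set.inter_subset_right (hs.inter hU)
  have ht : ∫ x, f x ∂μ₁ ≤ ∫ x, f x ∂μ₂ := by
    rw [hfU₁, hfU₂]
    exact integral_mono_measure hres_le (ae_of_all _ hf0) hint_f₂.restrict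
  -- the ν-side
  have hbdd : ∀ (φ : C(Ω, ℝ)) (y : Ωs), BddAbove (Set.range fun x => φ x - c (x, y)) := by
    intro φ y
    exact aux_bdd _ (by fun_prop)
  have hptM : ∀ y, (⨆ x, ((φ₁ ⊔ φ₂) x - c (x, y)))
      = max (⨆ x, (φ₁ x - c (x, y))) (⨆ x, (φ₂ x - c (x, y))) := by
    intro y
    apply le_antisymm
    · refine ciSup_le fun x => ?_
      rw [ContinuousMap.sup_apply, ← max_sub_sub_right]
      exact max_le_max (le_ciSup (hbdd φ₁ y) x) (le_ciSup (hbdd φ₂ y) x)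
    · refine max_le (ciSup_mono (hbdd _ y) fun x => ?_) (ciSup_mono (hbdd _ y) fun x => ?_)
      · rw [ContinuousMap.sup_apply]
        have := le_max_left (φ₁ x) (φ₂ x); linarith
      · rw [ContinuousMap.sup_apply]
        have := le_max_right (φ₁ x) (φ₂ x); linarith
  have hptm₁ : ∀ y, (⨆ x, ((φ₁ ⊓ φ₂) x - c (x, y))) ≤ ⨆ x, (φ₁ x - c (x, y)) := by
    intro y
    refine ciSup_mono (hbdd φ₁ y) fun x => ?_
    rw [ContinuousMap.inf_apply]
    have := min_le_left (φ₁ x) (φ₂ x); linarith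
  have hptm₂ : ∀ y, (⨆ x, ((φ₁ ⊓ φ₂) x - c (x, y))) ≤ ⨆ x, (φ₂ x - c (x, y)) := by
    intro y
    refine ciSup_mono (hbdd φ₂ y) fun x => ?_
    rw [ContinuousMap.inf_apply]
    have := min_le_right (φ₁ x) (φ₂ x); linarith
  have hsum : ∀ y, (⨆ x, ((φ₁ ⊓ φ₂) x - c (x, y))) + (⨆ x, ((φ₁ ⊔ φ₂) x - c (x, y)))
      ≤ (⨆ x, (φ₁ x - c (x, y))) + (⨆ x, (φ₂ x - c (x, y))) := by
    intro y
    rw [hptM y]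
    rcases le_total (⨆ x, (φ₁ x - c (x, y))) (⨆ x, (φ₂ x - c (x, y))) with h | h
    · rw [max_eq_right h]; linarith [hptm₁ y]
    · rw [max_eq_left h]; linarith [hptm₂ y]
  have hintg : ∀ φ : C(Ω, ℝ), Integrable (fun y => ⨆ x, (φ x - c (x, y))) ν := fun φ =>
    aux_integrable ν (aux_cont_ctrans c hc φ)
  have hν : ∫ y, (⨆ x, ((φ₁ ⊓ φ₂) x - c (x, y))) ∂ν
        + ∫ y, (⨆ x, ((φ₁ ⊔ φ₂) x - c (x, y))) ∂ν
      ≤ ∫ y, (⨆ x, (φ₁ x - c (x, y))) ∂ν + ∫ y, (⨆ x, (φ₂ x - c (x, y))) ∂ν := by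
    rw [← integral_add (hintg (φ₁ ⊓ φ₂)) (hintg (φ₁ ⊔ φ₂)),
      ← integral_add (hintg φ₁) (hintg φ₂)]
    exact integral_mono ((hintg (φ₁ ⊓ φ₂)).add (hintg (φ₁ ⊔ φ₂)))
      ((hintg φ₁).add (hintg φ₂)) hsum
  -- arithmetic
  have e₁ := hJ μ₁ (φ₁ ⊓ φ₂)
  have e₂ := hJ μ₂ (φ₁ ⊔ φ₂)
  have e₃ := hJ μ₁ φ₁
  have e₄ := hJ μ₂ φ₂
  have a1 := h₁ (φ₁ ⊓ φ₂)
  have a2 := h₂ (φ₁ ⊔ φ₂)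
  rw [hIm] at e₁
  rw [hIM] at e₂
  have key1 : J μ₁ (φ₁ ⊓ φ₂) ≤ J μ₁ φ₁ := by linarith
  have key2 : J μ₂ (φ₁ ⊔ φ₂) ≤ J μ₂ φ₂ := by linarith
  have heq : ∫ x, f x ∂μ₁ = ∫ x, f x ∂μ₂ := by
    refine le_antisymm ht (by linarith)
  refine ⟨fun ψ => key1.trans (h₁ ψ), fun ψ => key2.trans (h₂ ψ), ?_⟩
  -- third part
  have hres : (μ₂.toSignedMeasure - μ₁.toSignedMeasure).totalVariation.restrict U
      + μ₁.restrict U = μ₂.restrict U := by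
    ext s hs
    rw [Measure.add_apply, Measure.restrict_apply hs, Measure.restrict_apply hs,
      Measure.restrict_apply hs]
    exact aux_tv μ₁ μ₂ (hs.inter hU)
      (fun B hB hBm => hμ B (hB.trans Set.inter_subset_right) hBm)
  have hofr : ∀ x, ENNReal.ofReal (φ₁ x - φ₂ x) = ENNReal.ofReal (f x) := by
    intro x
    simp only [hfdef]
    rcases le_total (φ₁ x) (φ₂ x) with h | h
    · rw [max_eq_right (sub_nonpos.2 h), ENNReal.ofReal_zero,
        ENNReal.ofReal_eq_zero.2 (sub_nonpos.2 h)]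
    · rw [max_eq_left (sub_nonneg.2 h)]
  rw [lintegral_congr hofr, ← lintegral_add_compl _ hU]
  have hUc0 : ∫⁻ x in Uᶜ, ENNReal.ofReal (f x)
      ∂(μ₂.toSignedMeasure - μ₁.toSignedMeasure).totalVariation = 0 := by
    rw [setLIntegral_congr_fun hU.compl
      (fun x hx => by rw [hfUc x hx, ENNReal.ofReal_zero]), lintegral_zero]
  have h1 : ∫⁻ x in U, ENNReal.ofReal (f x) ∂μ₁
      = ENNReal.ofReal (∫ x in U, f x ∂μ₁) :=
    (ofReal_integral_eq_lintegral_ofReal hint_f₁.restrict (ae_of_all _ hf0)).symm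
  have h2 : ∫⁻ x in U, ENNReal.ofReal (f x) ∂μ₂
      = ENNReal.ofReal (∫ x in U, f x ∂μ₂) :=
    (ofReal_integral_eq_lintegral_ofReal hint_f₂.restrict (ae_of_all _ hf0)).symm
  have hU0 : ∫⁻ x in U, ENNReal.ofReal (f x)
      ∂(μ₂.toSignedMeasure - μ₁.toSignedMeasure).totalVariation = 0 := by
    have hadd := lintegral_add_measure (fun x => ENNReal.ofReal (f x))
      ((μ₂.toSignedMeasure - μ₁.toSignedMeasure).totalVariation.restrict U) (μ₁.restrict U)
    rw [hres, h1, h2, hfU₁.symm, hfU₂.symm, heq] at hadd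
    have hne : ENNReal.ofReal (∫ x, f x ∂μ₂) ≠ ⊤ := ENNReal.ofReal_ne_top
    have h0 : ENNReal.ofReal (∫ x, f x ∂μ₂) + ∫⁻ x in U, ENNReal.ofReal (f x)
          ∂(μ₂.toSignedMeasure - μ₁.toSignedMeasure).totalVariation
        = ENNReal.ofReal (∫ x, f x ∂μ₂) + 0 := by
      rw [add_zero, add_comm]; exact hadd.symm
    exact (ENNReal.add_right_inj hne).1 h0
  rw [hU0, hUc0, add_zero]
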